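/- Let m be an even positive integer and let e_0 = 1, e_1, …, e_{l−1}, e_l = m−1 be positive integers with e_i | e_{i+1} and e_i ≠ e_{i+1} for all i; set f_j = (m−1)/e_j. Let γ_j ∈ F_{2^{e_j}} (0 ≤ j ≤ l−1) satisfy Σ_{i=0}^{j} γ_i ≠ 0 for every j = 0,1,…,l−1. Define Q_j(x) = Tr^{m−1}_1( Σ_{i=1}^{(f_j−1)/2} x^{2^{i e_j}+1} ) and f(x₁,x₂) = Σ_{j=0}^{l−1} Q_j(γ_j x₁) + x₂ Tr^{m−1}_1(x₁) on F_{2^{m−1}} × F_2. Then f is a cyclic bent function. -/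

import Mathlib

open Finset

noncomputable section

abbrev Fq (n : ℕ) := GaloisField 2 n

noncomputable instance (n : ℕ) : Fintype (Fq n) := Fintype.ofFinite _

/-- Absolute trace from `F_{2^n}` to `F_2`. -/
noncomputable def tr1 (n : ℕ) (x : Fq n) : ZMod 2 :=
  Algebra.trace (ZMod 2) (Fq n) x

/-- `(-1)^x` for `x : F_2`, as an integer. -/
def chi (x : ZMod 2) : ℤ := (-1 : ℤ) ^ x.val

/-- Walsh transform of a Boolean function on `F_{2^n} × F_2`. -/
noncomputable def walsh (n : ℕ) (f : Fq n × ZMod 2 → ZMod 2)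
    (lam : Fq n) (nu : ZMod 2) : ℤ :=
  ∑ x : Fq n × ZMod 2, chi (f x + tr1 n (lam * x.1) + nu * x.2)

/-- A Boolean function on `F_{2^{m-1}} × F_2` is bent if all its Walsh coefficients
are `± 2^(m/2)`. -/
def IsBent (m : ℕ) (f : Fq (m - 1) × ZMod 2 → ZMod 2) : Prop :=
  ∀ lam nu, walsh (m - 1) f lam nu = 2 ^ (m / 2) ∨ walsh (m - 1) f lam nu = -(2 ^ (m / 2))

/-- Cyclic bent function on `F_{2^{m-1}} × F_2`. -/
def IsCyclicBent (m : ℕ) (f : Fq (m - 1) × ZMod 2 → ZMod 2) : Prop :=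
  ∀ a b : Fq (m - 1), a ≠ b → ∀ ε : ZMod 2,
    IsBent m fun x => f (a * x.1, x.2) + f (b * x.1, x.2 + ε)

/-- The quadratic function `Q_j(x) = Tr^{m-1}_1 (Σ_{i=1}^{(f_j-1)/2} x^{2^{i e_j}+1})`,
where `f_j = (m-1)/e_j`. -/
noncomputable def Qfun (m e : ℕ) (x : Fq (m - 1)) : ZMod 2 :=
  tr1 (m - 1) (∑ i ∈ Finset.Icc 1 (((m - 1) / e - 1) / 2), x ^ (2 ^ (i * e) + 1))

-- Part 0
lemma chi_add (p q : ZMod 2) : chi (p + q) = chi p * chi q := by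
  revert p q; decide

lemma chi_zero : chi 0 = 1 := by decide

lemma sum_chi_eq_zero {V : Type*} [AddCommGroup V] [Fintype V] (φ : V → ZMod 2)
    (hφ : ∀ x y, φ (x + y) = φ x + φ y) (x₀ : V) (h : φ x₀ ≠ 0) :
    ∑ x : V, chi (φ x) = 0 := by
  have h1 : φ x₀ = 1 := by revert h; generalize φ x₀ = a; revert a; decide
  have e1 : ∑ x : V, chi (φ (x + x₀)) = ∑ x : V, chi (φ x) :=
    Fintype.sum_equiv (Equiv.addRight x₀) _ _ (fun x => rfl)
  have e2 : ∀ x : V, chi (φ (x + x₀)) = - chi (φ x) := by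
    intro x
    rw [hφ, h1]
    generalize φ x = a; revert a; decide
  simp only [e2, Finset.sum_neg_distrib] at e1
  omega

-- Part 1
variable {N : ℕ}

lemma fq_frob_add (x y : Fq N) (k : ℕ) : (x + y) ^ (2^k) = x ^ (2^k) + y ^ (2^k) :=
  add_pow_char_pow x y 2 k

lemma fq_card (hN : N ≠ 0) : Fintype.card (Fq N) = 2 ^ N := by
  rw [← Nat.card_eq_fintype_card, GaloisField.card (p := 2) (n := N) hN]

lemma fq_pow_card (hN : N ≠ 0) (x : Fq N) : x ^ (2^N) = x := by
  rw [← fq_card hN]; exact FiniteField.pow_card x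

lemma fq_add_self (x : Fq N) : x + x = 0 := by
  have : (2 : Fq N) = 0 := by
    have := (CharP.cast_eq_zero_iff (Fq N) 2 2).2 dvd_rfl
    exact_mod_cast this
  linear_combination x * this

-- "fixed at level E" predicate
def fx (E : ℕ) (x : Fq N) : Prop := x ^ (2^E) = x

lemma fx_zero (E : ℕ) : fx E (0 : Fq N) := by
  have : (2:ℕ)^E ≠ 0 := by positivity
  simp [fx, zero_pow this]

lemma fx_one (E : ℕ) : fx E (1 : Fq N) := one_pow _

lemma fx_add {E : ℕ} {x y : Fq N} (hx : fx E x) (hy : fx E y) : fx E (x + y) := by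
  unfold fx at *; rw [fq_frob_add, hx, hy]

lemma fx_mul {E : ℕ} {x y : Fq N} (hx : fx E x) (hy : fx E y) : fx E (x * y) := by
  unfold fx at *; rw [mul_pow, hx, hy]

lemma fx_sum {E : ℕ} {ι : Type*} (s : Finset ι) (g : ι → Fq N)
    (h : ∀ i ∈ s, fx E (g i)) : fx E (∑ i ∈ s, g i) := by
  classical
  induction s using Finset.induction_on with
  | empty => simpa [fx] using fx_zero E
  | @insert a s' hni ih =>
    rw [Finset.sum_insert hni]
    exact fx_add (h a (Finset.mem_insert_self a s')) (ih fun i hi => h i (Finset.mem_insert_of_mem hi))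

-- iterate: fixed at e implies fixed at multiples of e
lemma fx_mul_level {e : ℕ} {x : Fq N} (hx : fx e x) (k : ℕ) : x ^ (2^(k*e)) = x := by
  induction k with
  | zero => simp
  | succ k ih =>
    have : 2 ^ ((k+1)*e) = 2^(k*e) * 2^e := by ring
    rw [this, pow_mul, ih, hx]

lemma fx_of_dvd {e E : ℕ} {x : Fq N} (hx : fx e x) (h : e ∣ E) : fx E x := by
  obtain ⟨k, rfl⟩ := h
  unfold fx
  rw [mul_comm]
  exact fx_mul_level hx k

-- Part 2: power-sum traces
def Tp (N e f : ℕ) (x : Fq N) : Fq N := ∑ i ∈ range f, x ^ (2^(i*e))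

lemma fq_frob_sum {ι : Type*} (s : Finset ι) (g : ι → Fq N) (k : ℕ) :
    (∑ i ∈ s, g i) ^ (2^k) = ∑ i ∈ s, (g i) ^ (2^k) := by
  classical
  induction s using Finset.induction_on with
  | empty => simp [zero_pow (by positivity : (2:ℕ)^k ≠ 0)]
  | @insert a s' hni ih =>
    rw [Finset.sum_insert hni, Finset.sum_insert hni, fq_frob_add, ih]

lemma Tp_add (e f : ℕ) (x y : Fq N) : Tp N e f (x + y) = Tp N e f x + Tp N e f y := by
  unfold Tp
  rw [← Finset.sum_add_distrib]
  exact Finset.sum_congr rfl fun i _ => fq_frob_add x y (i*e)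

lemma Tp_zero (e f : ℕ) : Tp N e f (0 : Fq N) = 0 := by
  unfold Tp
  refine Finset.sum_eq_zero fun i _ => ?_
  exact zero_pow (by positivity)

lemma Tp_smul {e : ℕ} (f : ℕ) {k : Fq N} (hk : fx e k) (x : Fq N) :
    Tp N e f (k * x) = k * Tp N e f x := by
  unfold Tp
  rw [Finset.mul_sum]
  refine Finset.sum_congr rfl fun i _ => ?_
  rw [mul_pow, fx_mul_level hk]

lemma Tp_sq (e f : ℕ) (x : Fq N) : (Tp N e f x) ^ 2 = Tp N e f (x ^ 2) := by
  unfold Tp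
  have h := fq_frob_sum (range f) (fun i => x ^ (2^(i*e))) 1
  simp only [pow_one] at h
  rw [h]
  refine Finset.sum_congr rfl fun i _ => ?_
  rw [← pow_mul, ← pow_mul, mul_comm (2^(i*e)) 2]

lemma Tp_one (e : ℕ) {f : ℕ} (hf : Odd f) : Tp N e f (1 : Fq N) = 1 := by
  unfold Tp
  simp only [one_pow, Finset.sum_const, Finset.card_range, nsmul_eq_mul, mul_one]
  obtain ⟨k, hk⟩ := hf
  have : ((f : Fq N)) = ((2*k+1 : ℕ) : Fq N) := by rw [← hk]
  rw [this]
  push_cast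
  have h2 : (2 : Fq N) = 0 := by
    have := (CharP.cast_eq_zero_iff (Fq N) 2 2).2 dvd_rfl
    exact_mod_cast this
  rw [h2]; ring

lemma Tp_fx {e f : ℕ} {x : Fq N} (hx : x ^ (2^(f*e)) = x) : fx e (Tp N e f x) := by
  unfold fx Tp
  rw [fq_frob_sum]
  have key : ∀ i : ℕ, (x ^ (2^(i*e))) ^ (2^e) = x ^ (2^((i+1)*e)) := by
    intro i
    rw [← pow_mul, ← pow_add, add_mul, one_mul]
  simp only [key]
  have h1 := Finset.sum_range_succ' (fun i => x ^ (2^(i*e))) f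
  have h2 := Finset.sum_range_succ (fun i => x ^ (2^(i*e))) f
  rw [h2] at h1
  simp only [Nat.zero_mul, pow_zero, pow_one, hx] at h1
  -- h1 : ∑ i ∈ range f, x^(2^((i+1)*e)) + x = ∑ i ∈ range f, x^(2^(i*e)) + x
  exact (add_right_cancel h1).symm

lemma sum_range_mul_decomp {M : Type*} [AddCommMonoid M] (g : ℕ → M) (a b : ℕ) :
    ∑ i ∈ range (a * b), g i = ∑ k ∈ range a, ∑ i ∈ range b, g (k * b + i) := by
  induction a with
  | zero => simp
  | succ a ih =>
    have : (a+1)*b = a*b + b := by ring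
    rw [this, Finset.sum_range_add, ih, Finset.sum_range_succ]

lemma Tp_tower (e d fE : ℕ) (x : Fq N) :
    Tp N e (fE * d) x = Tp N e d (Tp N (e*d) fE x) := by
  unfold Tp
  have h : ∀ i ∈ range d, (∑ k ∈ range fE, x ^ (2^(k*(e*d)))) ^ (2^(i*e))
      = ∑ k ∈ range fE, x ^ (2^((k*d+i)*e)) := by
    intro i _
    rw [fq_frob_sum]
    refine Finset.sum_congr rfl fun k _ => ?_
    rw [← pow_mul, ← pow_add]
    congr 1
    ring
  rw [Finset.sum_congr rfl h, sum_range_mul_decomp (fun j => x ^ (2^(j*e))) fE d,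
    Finset.sum_comm]

-- Part 3: bridge between tr1 and power sums
def frobAlg (N : ℕ) : Fq N ≃ₐ[ZMod 2] Fq N :=
  AlgEquiv.ofBijective
    { toRingHom := frobenius (Fq N) 2
      commutes' := fun r => by
        show frobenius (Fq N) 2 (algebraMap (ZMod 2) (Fq N) r) = algebraMap (ZMod 2) (Fq N) r
        rw [frobenius_def, ← map_pow]
        congr 1
        exact (ZMod.pow_card r) }
    ((Finite.injective_iff_bijective).mp (frobenius (Fq N) 2).injective)

lemma frobAlg_apply (x : Fq N) : frobAlg N x = x ^ 2 := rfl

lemma frobAlg_pow_apply (i : ℕ) (x : Fq N) : (frobAlg N ^ i) x = x ^ (2^i) := by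
  induction i generalizing x with
  | zero => simp
  | succ i ih =>
    rw [pow_succ, AlgEquiv.mul_apply, frobAlg_apply, ih (x^2), ← pow_mul, ← pow_succ']

lemma frob_pow_ne_one (hN : N ≠ 0) {d : ℕ} (hd0 : 0 < d) (hdN : d < N) :
    frobAlg N ^ d ≠ 1 := by
  intro h
  have hall : ∀ x : Fq N, x ^ (2^d) = x := by
    intro x
    have := congrArg (fun σ : Fq N ≃ₐ[ZMod 2] Fq N => σ x) h
    simpa [frobAlg_pow_apply] using this
  set p : Polynomial (Fq N) := Polynomial.X ^ (2^d) - Polynomial.X with hp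
  have hdeg : p.natDegree = 2^d := by
    rw [hp]
    have h1 : (Polynomial.X : Polynomial (Fq N)).natDegree < (Polynomial.X ^ (2^d) : Polynomial (Fq N)).natDegree := by
      rw [Polynomial.natDegree_X_pow, Polynomial.natDegree_X]
      have : (2:ℕ)^1 ≤ 2^d := Nat.pow_le_pow_right (by norm_num) hd0
      omega
    rw [Polynomial.natDegree_sub_eq_left_of_natDegree_lt h1, Polynomial.natDegree_X_pow]
  have hzero : p = 0 := by
    apply Polynomial.eq_zero_of_natDegree_lt_card_of_eval_eq_zero p (f := (id : Fq N → Fq N))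
      Function.injective_id
    · intro x
      simp [hp, hall x]
    · rw [hdeg, fq_card hN]
      exact Nat.pow_lt_pow_right (by norm_num) hdN
  rw [hzero, Polynomial.natDegree_zero] at hdeg
  have h2d : (2:ℕ)^d ≠ 0 := by positivity
  exact h2d hdeg.symm

lemma frobAlg_pow_inj (hN : N ≠ 0) :
    Function.Injective (fun i : Fin N => frobAlg N ^ (i : ℕ)) := by
  have key : ∀ u v : ℕ, u < v → v < N → frobAlg N ^ u = frobAlg N ^ v → False := by
    intro u v huv hvN h
    have h2 : frobAlg N ^ u * frobAlg N ^ (v - u) = frobAlg N ^ u * 1 := by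
      rw [mul_one, ← pow_add, Nat.add_sub_cancel' (le_of_lt huv), h]
    have h3 : frobAlg N ^ (v - u) = 1 := mul_left_cancel h2
    exact frob_pow_ne_one hN (by omega) (by omega) h3
  intro i j hij
  simp only at hij
  by_contra hne
  have hne' : (i:ℕ) ≠ (j:ℕ) := fun h => hne (Fin.ext h)
  rcases Nat.lt_or_ge (i:ℕ) (j:ℕ) with hlt | hge
  · exact key i j hlt j.isLt hij
  · exact key j i (by omega) i.isLt hij.symm

lemma tr1_bridge (hN : N ≠ 0) (x : Fq N) :
    algebraMap (ZMod 2) (Fq N) (tr1 N x) = Tp N 1 N x := by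
  rw [tr1, trace_eq_sum_automorphisms]
  have hbij : Function.Bijective (fun i : Fin N => frobAlg N ^ (i : ℕ)) := by
    rw [Fintype.bijective_iff_injective_and_card]
    refine ⟨frobAlg_pow_inj hN, ?_⟩
    rw [Fintype.card_fin, ← Nat.card_eq_fintype_card, IsGalois.card_aut_eq_finrank, GaloisField.finrank (p := 2) hN]
  rw [← Function.Bijective.sum_comp hbij (fun σ => σ x)]
  unfold Tp
  rw [← Fin.sum_univ_eq_sum_range (fun i => x ^ (2^(i*1)))]
  exact Finset.sum_congr rfl fun i _ => by rw [frobAlg_pow_apply]; norm_num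

lemma algebraMap_zmod_injective :
    Function.Injective (algebraMap (ZMod 2) (Fq N)) :=
  (algebraMap (ZMod 2) (Fq N)).injective

lemma tr1_eq_zero_iff (hN : N ≠ 0) (x : Fq N) : tr1 N x = 0 ↔ Tp N 1 N x = 0 := by
  rw [← tr1_bridge hN]
  constructor
  · intro h; rw [h, map_zero]
  · intro h
    exact algebraMap_zmod_injective (by rw [h, map_zero])

lemma tr1_sq (hN : N ≠ 0) (x : Fq N) : tr1 N (x^2) = tr1 N x := by
  apply algebraMap_zmod_injective
  rw [tr1_bridge hN, tr1_bridge hN, ← Tp_sq]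
  have hfx : fx 1 (Tp N 1 N x) := Tp_fx (by rw [mul_one]; exact fq_pow_card hN x)
  have h2 : (Tp N 1 N x) ^ (2:ℕ) = Tp N 1 N x := by
    have h := hfx; unfold fx at h; rw [pow_one] at h; exact h
  rw [h2]

lemma tr1_pow2 (hN : N ≠ 0) (k : ℕ) (x : Fq N) : tr1 N (x^(2^k)) = tr1 N x := by
  induction k with
  | zero => simp
  | succ k ih =>
    have : x ^ (2^(k+1)) = (x ^ (2^k))^2 := by rw [← pow_mul, pow_succ]
    rw [this, tr1_sq hN, ih]

lemma tr1_nondeg (d : Fq N) (h : ∀ x, tr1 N (x * d) = 0) : d = 0 := by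
  have hnd := traceForm_nondegenerate (ZMod 2) (Fq N)
  apply hnd.1
  intro x
  have := h x
  rw [Algebra.traceForm_apply]
  rw [tr1] at this
  rw [mul_comm] at this
  exact this

-- misc helpers
lemma fq_two : (2 : Fq N) = 0 := by
  have := (CharP.cast_eq_zero_iff (Fq N) 2 2).2 dvd_rfl
  exact_mod_cast this

lemma Tp_f_one (e : ℕ) (x : Fq N) : Tp N e 1 x = x := by
  simp [Tp]

lemma fx_algebraMap (E : ℕ) (s : ZMod 2) : fx E (algebraMap (ZMod 2) (Fq N) s) := by
  fin_cases s
  · show fx E (algebraMap (ZMod 2) (Fq N) 0); rw [map_zero]; exact fx_zero (N := N) E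
  · show fx E (algebraMap (ZMod 2) (Fq N) 1); rw [map_one]; exact fx_one (N := N) E

lemma chain_dvd {l : ℕ} {e : ℕ → ℕ} (hdvd : ∀ j, j < l → e j ∣ e (j+1)) :
    ∀ i j, i ≤ j → j ≤ l → e i ∣ e j := by
  intro i j
  induction j with
  | zero => intro h _; interval_cases i; exact dvd_rfl
  | succ j ih =>
    intro hij hjl
    rcases Nat.eq_or_lt_of_le hij with h | h
    · rw [h]
    · exact (ih (by omega) (by omega)).trans (hdvd j (by omega))

lemma odd_of_dvd {a b : ℕ} (h : a ∣ b) (hb : Odd b) : Odd a := by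
  rcases Nat.even_or_odd a with he | ho
  · exfalso
    have : (2:ℕ) ∣ b := dvd_trans (Even.two_dvd he) h
    have : Even b := by obtain ⟨c,hc⟩ := this; exact ⟨c, by omega⟩
    exact (Nat.not_even_iff_odd.mpr hb) this
  · exact ho

-- Part 4: THE KEY LEMMA
theorem key_lemma :
    ∀ (l : ℕ), 0 < l → ∀ (e : ℕ → ℕ) (γ : ℕ → Fq N),
      e 0 = 1 → (∀ j, j < l → e j ∣ e (j+1)) → (∀ j, j ≤ l → 0 < e j) → Odd (e l) →
      (∀ j, j < l → fx (e j) (γ j)) → (∀ j, j < l → ∑ i ∈ range (j+1), γ i ≠ 0) →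
      ∀ (t Y : Fq N) (s : ZMod 2), fx (e l) t → fx (e l) Y →
      (∑ j ∈ range l, (γ j)^2 * Tp N (e j) (e l / e j) (t * Y))
        + (1 + t) * (∑ j ∈ range l, (γ j)^2 * Tp N (e j) (e l / e j) Y)
        + (∑ i ∈ range l, γ i)^2 * Y = algebraMap (ZMod 2) (Fq N) s →
      Tp N 1 (e l) Y = 0 → Y = 0 ∧ s = 0 := by
  intro l hl
  induction l, hl using Nat.le_induction with
  | base =>
    intro e γ he0 hdvd hpos hodd hγ hsum t Y s ht hY hE hside
    set sb := algebraMap (ZMod 2) (Fq N) s with hsb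
    -- γ 0 = 1
    have hγ0 : γ 0 ^ 2 = γ 0 := by
      have h := hγ 0 (by omega)
      unfold fx at h
      rwa [he0, pow_one] at h
    have hγ0ne : γ 0 ≠ 0 := by
      have := hsum 0 (by omega)
      simpa using this
    have hγ01 : γ 0 = 1 := by
      have h : γ 0 * (γ 0 - 1) = 0 := by ring_nf; linear_combination hγ0
      rcases mul_eq_zero.mp h with h | h
      · exact absurd h hγ0ne
      · exact sub_eq_zero.mp h
    have h10 : Nat.succ 0 = 1 := rfl
    rw [h10] at hE hside ht hY hodd
    simp only [Finset.sum_range_one, hγ01, one_pow, one_mul, he0, Nat.div_one] at hE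
    rw [hside, mul_zero, add_zero] at hE
    -- hE : Tp N 1 (e 1) (t*Y) + Y = sb
    have hfxtY : fx (e 1) (t * Y) := fx_mul ht hY
    have hufx : fx 1 (Tp N 1 (e 1) (t * Y)) := Tp_fx (by rw [mul_one]; exact hfxtY)
    have hu2 : (Tp N 1 (e 1) (t * Y))^2 = Tp N 1 (e 1) (t * Y) := by
      have h := hufx; unfold fx at h; rwa [pow_one] at h
    have hsb2 : sb^2 = sb := by
      have h := fx_algebraMap (N := N) 1 s; unfold fx at h; rwa [pow_one, ← hsb] at h
    have hYeq : Y = sb + Tp N 1 (e 1) (t * Y) := by linear_combination hE - (Tp N 1 (e 1) (t*Y)) * fq_two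
    have hY2 : Y^2 = Y := by
      rw [hYeq]
      have := fq_frob_add (N := N) sb (Tp N 1 (e 1) (t * Y)) 1
      rw [pow_one] at this
      rw [this, hu2, hsb2]
    have hY01 : Y = 0 ∨ Y = 1 := by
      have h : Y * (Y - 1) = 0 := by ring_nf; linear_combination hY2
      rcases mul_eq_zero.mp h with h | h
      · exact Or.inl h
      · exact Or.inr (sub_eq_zero.mp h)
    rcases hY01 with hY0 | hY1
    · refine ⟨hY0, ?_⟩
      rw [hY0, mul_zero, Tp_zero, add_zero] at hE
      have : sb = 0 := hE.symm
      have := algebraMap_zmod_injective (N := N) (a₁ := s) (a₂ := 0) (by rw [map_zero, ← hsb]; exact this)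
      exact this
    · exfalso
      rw [hY1, Tp_one 1 hodd] at hside
      exact one_ne_zero hside
  | succ l hl ih =>
    intro e γ he0 hdvd hpos hodd hγ hsum t Y s ht hY hE hside
    have h2 : (2 : Fq N) = 0 := fq_two
    have hdN12 : e l ∣ e (l+1) := hdvd l (by omega)
    have hN2pos : 0 < e l := hpos l (by omega)
    have hN1pos : 0 < e (l+1) := hpos (l+1) (by omega)
    have hfE : e (l+1) / e l * e l = e (l+1) := Nat.div_mul_cancel hdN12
    have hN2odd : Odd (e l) := odd_of_dvd hdN12 hodd
    have hfodd : Odd (e (l+1) / e l) := by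
      have hmul : e l * (e (l+1) / e l) = e (l+1) := Nat.mul_div_cancel' hdN12
      have h := hodd; rw [← hmul] at h; exact (Nat.odd_mul.mp h).2
    have hchain : ∀ j, j ≤ l + 1 → e j ∣ e (l+1) :=
      fun j hj => chain_dvd hdvd j (l+1) hj (le_refl _)
    have hchain2 : ∀ j, j ≤ l → e j ∣ e l :=
      fun j hj => chain_dvd hdvd j l hj (by omega)
    set sb := algebraMap (ZMod 2) (Fq N) s with hsb
    set z := ∑ j ∈ range (l+1), (γ j)^2 * Tp N (e j) (e (l+1) / e j) (t * Y) with hz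
    set w := ∑ j ∈ range (l+1), (γ j)^2 * Tp N (e j) (e (l+1) / e j) Y with hw
    set G := ∑ i ∈ range (l+1), γ i with hG
    have hγsq : ∀ j, j < l+1 → fx (e j) ((γ j)^2) := by
      intro j hj; rw [pow_two]; exact fx_mul (hγ j hj) (hγ j hj)
    have hfxterm : ∀ (x : Fq N), fx (e (l+1)) x → ∀ j, j < l+1 →
        fx (e l) ((γ j)^2 * Tp N (e j) (e (l+1) / e j) x) := by
      intro x hx j hj
      have hejN2 : e j ∣ e l := hchain2 j (by omega)
      apply fx_of_dvd _ hejN2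
      apply fx_mul (hγsq j hj)
      apply Tp_fx
      rw [Nat.div_mul_cancel (hchain j (by omega))]
      exact hx
    have hfxz : fx (e l) z :=
      fx_sum _ _ (fun j hj => hfxterm (t*Y) (fx_mul ht hY) j (Finset.mem_range.mp hj))
    have hfxw : fx (e l) w :=
      fx_sum _ _ (fun j hj => hfxterm Y hY j (Finset.mem_range.mp hj))
    have hfxG : fx (e l) G :=
      fx_sum _ _ (fun i hi => fx_of_dvd (hγ i (Finset.mem_range.mp hi))
        (hchain2 i (by have := Finset.mem_range.mp hi; omega)))
    have hfxG2 : fx (e l) (G^2) := by rw [pow_two]; exact fx_mul hfxG hfxG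
    have hfxsb : fx (e l) sb := by rw [hsb]; exact fx_algebraMap (e l) s
    have hGne : G ≠ 0 := hsum l (by omega)
    have hG2ne : G^2 ≠ 0 := pow_ne_zero 2 hGne
    have hC3 : G^2 * Y = sb + z + w + t * w := by
      linear_combination hE - (z + w + t*w) * h2
    set u := Tp N (e l) (e (l+1) / e l) Y with hu
    set τ := Tp N (e l) (e (l+1) / e l) t with hτ
    have hfxu : fx (e l) u := Tp_fx (by rw [hfE]; exact hY)
    have hfxτ : fx (e l) τ := Tp_fx (by rw [hfE]; exact ht)
    have hT1 : Tp N (e l) (e (l+1) / e l) (1 : Fq N) = 1 := Tp_one (e l) hfodd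
    -- Claim 4
    have hC4 : G^2 * u = sb + z + w + w * τ := by
      have e1 : Tp N (e l) (e (l+1) / e l) (G^2 * Y) = G^2 * u := Tp_smul _ hfxG2 Y
      rw [hC3] at e1
      rw [show sb + z + w + t*w = sb*1 + (z*1 + (w*1 + w*t)) from by ring] at e1
      rw [Tp_add, Tp_add, Tp_add, Tp_smul _ hfxsb, Tp_smul _ hfxz, Tp_smul _ hfxw,
        Tp_smul _ hfxw, hT1] at e1
      rw [← e1]; ring
    -- Claim 5
    have hC5 : Tp N (e l) (e (l+1) / e l) (t * Y) = τ * u := by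
      have e1 : Tp N (e l) (e (l+1) / e l) (G^2 * (t * Y)) =
          G^2 * Tp N (e l) (e (l+1) / e l) (t * Y) := Tp_smul _ hfxG2 _
      rw [show G^2 * (t*Y) = t * (G^2 * Y) from by ring, hC3] at e1
      rw [show t * (sb + z + w + t*w) = sb*t + (z*t + (w*t + w*t^2)) from by ring] at e1
      rw [Tp_add, Tp_add, Tp_add, Tp_smul _ hfxsb, Tp_smul _ hfxz, Tp_smul _ hfxw,
        Tp_smul _ hfxw, ← Tp_sq] at e1
      have e4 : G^2 * (τ * u) = sb*τ + (z*τ + (w*τ + w*τ^2)) := by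
        calc G^2*(τ*u) = τ * (G^2*u) := by ring
          _ = τ * (sb + z + w + w*τ) := by rw [hC4]
          _ = sb*τ + (z*τ + (w*τ + w*τ^2)) := by ring
      exact mul_left_cancel₀ hG2ne (e1.symm.trans e4.symm)
    -- Claim 6 tower
    have hTow : ∀ j, j < l+1 → ∀ x : Fq N, Tp N (e j) (e (l+1) / e j) x
        = Tp N (e j) (e l / e j) (Tp N (e l) (e (l+1) / e l) x) := by
      intro j hj x
      have hej2 : e j ∣ e l := hchain2 j (by omega)
      have hejpos : 0 < e j := hpos j (by omega)
      have h1 : e j * (e l / e j) = e l := Nat.mul_div_cancel' hej2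
      have h2' : (e (l+1) / e l) * (e l / e j) = e (l+1) / e j := by
        rw [Nat.div_mul_div_comm hdN12 hej2, mul_comm (e (l+1)) (e l),
          Nat.mul_div_mul_left _ _ (by omega : 0 < e l)]
      have htt := Tp_tower (N := N) (e j) (e l / e j) (e (l+1) / e l) x
      rw [h2', h1] at htt
      exact htt
    have hzeq : z = (∑ j ∈ range l, (γ j)^2 * Tp N (e j) (e l / e j) (τ * u))
        + (γ l)^2 * (τ * u) := by
      rw [hz, Finset.sum_range_succ]
      congr 1
      · refine Finset.sum_congr rfl fun j hj => ?_
        have hjl := Finset.mem_range.mp hj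
        rw [hTow j (by omega), hC5]
      · rw [hTow l (by omega), hC5, Nat.div_self hN2pos, Tp_f_one]
    have hweq : w = (∑ j ∈ range l, (γ j)^2 * Tp N (e j) (e l / e j) u)
        + (γ l)^2 * u := by
      rw [hw, Finset.sum_range_succ]
      congr 1
      refine Finset.sum_congr rfl fun j hj => ?_
      have hjl := Finset.mem_range.mp hj
      rw [hTow j (by omega)]
    have hGsq : G^2 = (∑ i ∈ range l, γ i)^2 + (γ l)^2 := by
      rw [hG, Finset.sum_range_succ]
      linear_combination ((∑ i ∈ range l, γ i) * γ l) * h2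
    have hIHeq : (∑ j ∈ range l, (γ j)^2 * Tp N (e j) (e l / e j) (τ * u))
        + (1+τ) * (∑ j ∈ range l, (γ j)^2 * Tp N (e j) (e l / e j) u)
        + (∑ i ∈ range l, γ i)^2 * u = sb := by
      linear_combination hC4 - hzeq - (1+τ)*hweq - u*hGsq
        + ((γ l)^2*u + τ*(γ l)^2*u - z - w - w*τ)*h2
        + (- τ*u*(γ l)^2*2 + τ*w*2 - u*(γ l)^2*2 + z*2 + w*2)*h2
    have hside2 : Tp N 1 (e l) u = 0 := by
      have htt := Tp_tower (N := N) 1 (e l) (e (l+1) / e l) Y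
      rw [one_mul, hfE] at htt
      rw [← htt]
      exact hside
    have hmain := ih e γ he0 (fun j hj => hdvd j (by omega)) (fun j hj => hpos j (by omega))
      hN2odd (fun j hj => hγ j (by omega)) (fun j hj => hsum j (by omega)) τ u s hfxτ hfxu
      hIHeq hside2
    obtain ⟨hu0, hs0⟩ := hmain
    have hsb0 : sb = 0 := by rw [hsb, hs0, map_zero]
    have hz0 : z = 0 := by
      rw [hzeq, hu0]
      simp [Tp_zero]
    have hw0 : w = 0 := by
      rw [hweq, hu0]
      simp [Tp_zero]
    have hY0 : Y = 0 := by
      have hh : G^2 * Y = 0 := by rw [hC3, hsb0, hz0, hw0]; ring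
      exact (mul_eq_zero.mp hh).resolve_left hG2ne
    exact ⟨hY0, hs0⟩

-- Part 5: master formula ingredients
lemma tr1_add (x y : Fq N) : tr1 N (x + y) = tr1 N x + tr1 N y := by
  unfold tr1; exact map_add _ x y

lemma tr1_zero : tr1 N 0 = 0 := by unfold tr1; exact map_zero _

lemma tr1_sum {ι : Type*} (s : Finset ι) (g : ι → Fq N) :
    tr1 N (∑ i ∈ s, g i) = ∑ i ∈ s, tr1 N (g i) := by
  unfold tr1; exact map_sum _ _ _

lemma sum_Ico_reflect {M : Type*} [AddCommMonoid M] (g : ℕ → M) {f : ℕ} (hf : Odd f) :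
    ∑ i ∈ Finset.Icc 1 ((f-1)/2), (g i + g (f - i)) = ∑ i ∈ Finset.Ico 1 f, g i := by
  obtain ⟨k, hk⟩ := hf
  have hM : (f-1)/2 = k := by omega
  have hIccIco : Finset.Icc 1 ((f-1)/2) = Finset.Ico 1 (k+1) := by
    rw [hM, ← Finset.Ico_add_one_right_eq_Icc]
  rw [hIccIco, Finset.sum_add_distrib]
  have hsplit : ∑ i ∈ Finset.Ico 1 (k+1), g i + ∑ i ∈ Finset.Ico (k+1) f, g i
      = ∑ i ∈ Finset.Ico 1 f, g i :=
    Finset.sum_Ico_consecutive g (by omega) (by omega)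
  have hrefl : ∑ i ∈ Finset.Ico 1 (k+1), g (f - i) = ∑ i ∈ Finset.Ico (k+1) f, g i := by
    apply Finset.sum_nbij' (fun i => f - i) (fun i => f - i)
    · intro i hi
      simp only [Finset.mem_Ico] at hi ⊢
      omega
    · intro i hi
      simp only [Finset.mem_Ico] at hi ⊢
      omega
    · intro i hi
      simp only [Finset.mem_Ico] at hi
      omega
    · intro i hi
      simp only [Finset.mem_Ico] at hi
      omega
    · intro i hi; rfl
  rw [hrefl]
  exact hsplit

lemma Tp_eq_self_add_Ico (e : ℕ) {f : ℕ} (hf : 0 < f) (x : Fq N) :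
    Tp N e f x = x + ∑ i ∈ Finset.Ico 1 f, x ^ (2^(i*e)) := by
  unfold Tp
  rw [Finset.range_eq_Ico, Finset.sum_eq_sum_Ico_succ_bot hf]
  norm_num

-- the adjoint trick
lemma tr1_adjoint (hN : N ≠ 0) (A B : Fq N) {k : ℕ} (hk : k ≤ N) :
    tr1 N (A ^ (2^k) * B) = tr1 N (A * B ^ (2^(N-k))) := by
  have h1 : tr1 N ((A ^ (2^k) * B) ^ (2^(N-k))) = tr1 N (A ^ (2^k) * B) := tr1_pow2 hN _ _
  rw [← h1]
  congr 1
  have h3 : (2:ℕ)^k * 2^(N-k) = 2^N := by rw [← pow_add]; congr 1; omega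
  rw [mul_pow, ← pow_mul, h3, fq_pow_card hN]

-- second difference of one Q-type function
lemma Q_second_diff (hN : N ≠ 0) (e : ℕ) {f : ℕ} (hef : e * f = N) (hfodd : Odd f)
    (d x u : Fq N) :
    tr1 N (∑ i ∈ Finset.Icc 1 ((f-1)/2), (d*(x+u))^(2^(i*e)+1))
      + tr1 N (∑ i ∈ Finset.Icc 1 ((f-1)/2), (d*x)^(2^(i*e)+1))
      + tr1 N (∑ i ∈ Finset.Icc 1 ((f-1)/2), (d*u)^(2^(i*e)+1))
    = tr1 N (x * (d * (Tp N e f (d*u) + d*u))) := by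
  have hfpos : 0 < f := hfodd.pos
  have key1 : ∀ i, (d*(x+u))^(2^(i*e)+1) + (d*x)^(2^(i*e)+1) + (d*u)^(2^(i*e)+1)
      = (d*x)^(2^(i*e)) * (d*u) + (d*x)*(d*u)^(2^(i*e)) := by
    intro i
    have hfa : d*(x+u) = d*x + d*u := by ring
    rw [hfa, pow_succ, fq_frob_add, pow_succ (d*x), pow_succ (d*u)]
    linear_combination ((d*x)^(2^(i*e))*(d*x) + (d*u)^(2^(i*e))*(d*u)) * fq_two
  rw [← tr1_add, ← tr1_add, ← Finset.sum_add_distrib, ← Finset.sum_add_distrib]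
  have step1 : ∀ i ∈ Finset.Icc 1 ((f-1)/2),
      (d*(x+u))^(2^(i*e)+1) + (d*x)^(2^(i*e)+1) + (d*u)^(2^(i*e)+1)
      = (d*x)^(2^(i*e)) * (d*u) + (d*x)*(d*u)^(2^(i*e)) := fun i _ => key1 i
  rw [Finset.sum_congr rfl step1, tr1_sum]
  have step2 : ∀ i ∈ Finset.Icc 1 ((f-1)/2),
      tr1 N ((d*x)^(2^(i*e)) * (d*u) + (d*x)*(d*u)^(2^(i*e)))
      = tr1 N (x * (d * ((d*u)^(2^((f-i)*e)) + (d*u)^(2^(i*e))))) := by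
    intro i hi
    have hile : i ≤ (f-1)/2 := (Finset.mem_Icc.mp hi).2
    have hik : i * e ≤ N := by
      calc i * e ≤ f * e := Nat.mul_le_mul_right e (by omega)
        _ = N := by rw [mul_comm]; exact hef
    rw [tr1_add]
    have hadj : tr1 N ((d*x)^(2^(i*e)) * (d*u)) = tr1 N ((d*x) * (d*u)^(2^(N - i*e))) :=
      tr1_adjoint hN (d*x) (d*u) hik
    have hsub : N - i*e = (f-i)*e := by
      have : f * e = N := by rw [mul_comm]; exact hef
      have hif : i ≤ f := by omega
      calc N - i*e = f*e - i*e := by rw [this]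
        _ = (f-i)*e := by rw [Nat.sub_mul]
    rw [hadj, hsub, ← tr1_add]
    congr 1
    ring
  rw [Finset.sum_congr rfl step2, ← tr1_sum]
  congr 1
  have step3 : ∑ i ∈ Finset.Icc 1 ((f-1)/2),
      x * (d * ((d*u)^(2^((f-i)*e)) + (d*u)^(2^(i*e))))
      = x * (d * (∑ i ∈ Finset.Icc 1 ((f-1)/2), ((d*u)^(2^(i*e)) + (d*u)^(2^((f-i)*e))))) := by
    rw [Finset.mul_sum, Finset.mul_sum]
    refine Finset.sum_congr rfl fun i _ => ?_
    ring
  rw [step3, sum_Ico_reflect (fun i => (d*u)^(2^(i*e))) hfodd,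
    Tp_eq_self_add_Ico e hfpos (d*u)]
  linear_combination (-(x*(d*(d*u)))) * fq_two

lemma zmod2_cases (z : ZMod 2) : z = 0 ∨ z = 1 := by revert z; decide

/-- the general construction of cyclic bent functions. -/
theorem stmt2 (m l : ℕ) (hm : Even m) (hm0 : 0 < m) (hl : 0 < l)
    (e : ℕ → ℕ) (hpos : ∀ i ≤ l, 0 < e i)
    (he0 : e 0 = 1) (hel : e l = m - 1)
    (hdvd : ∀ i < l, e i ∣ e (i + 1)) (hne : ∀ i < l, e i ≠ e (i + 1))
    (γ : ℕ → Fq (m - 1))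
    (hγ : ∀ j < l, γ j ^ (2 ^ e j) = γ j)  -- γ_j ∈ F_{2^{e_j}}
    (hsum : ∀ j < l, ∑ i ∈ Finset.range (j + 1), γ i ≠ 0) :
    IsCyclicBent m fun x =>
      (∑ j ∈ Finset.range l, Qfun m (e j) (γ j * x.1)) + x.2 * tr1 (m - 1) x.1 := by
  have hn0 : 0 < m - 1 := by rw [← hel]; exact hpos l le_rfl
  have hn : m - 1 ≠ 0 := by omega
  have hnodd : Odd (m - 1) := by
    obtain ⟨k, hk⟩ := hm
    exact ⟨k - 1, by omega⟩
  intro a b hab ε lam nu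
  set c : Fq (m-1) := a + b with hc
  have hcne : c ≠ 0 := by
    intro h
    apply hab
    calc a = a + (b + b) := by rw [fq_add_self, add_zero]
      _ = c + b := by rw [hc]; ring
      _ = b := by rw [h, zero_add]
  set Tj : ℕ → Fq (m-1) → Fq (m-1) := fun j v => Tp (m-1) (e j) ((m-1) / e j) v with hTj
  set L : Fq (m-1) → Fq (m-1) := fun v =>
    (∑ j ∈ range l, (γ j)^2 * (a * Tj j (a*v) + b * Tj j (b*v)))
      + (∑ j ∈ range l, (γ j)^2) * c^2 * v with hL
  set H : Fq (m-1) × ZMod 2 → ZMod 2 := fun x =>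
    ((∑ j ∈ range l, Qfun m (e j) (γ j * (a * x.1))) + x.2 * tr1 (m - 1) (a * x.1)
      + ((∑ j ∈ range l, Qfun m (e j) (γ j * (b * x.1))) + (x.2 + ε) * tr1 (m - 1) (b * x.1)))
      + tr1 (m-1) (lam * x.1) + nu * x.2 with hH
  have hchain : ∀ j, j < l → e j ∣ m - 1 := by
    intro j hj
    rw [← hel]
    exact chain_dvd hdvd j l (by omega) le_rfl
  -- ====== master formula ======
  have hmaster : ∀ x1 u1 : Fq (m-1), ∀ x2 u2 : ZMod 2,
      H (x1+u1, x2+u2) + H (x1,x2) + H (u1,u2) + H (0,0)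
      = tr1 (m-1) (x1 * L u1) + x2 * tr1 (m-1) (c * u1) + u2 * tr1 (m-1) (c * x1) := by
    intro x1 u1 x2 u2
    have hQd : ∀ d : Fq (m-1),
        (∑ j ∈ range l, Qfun m (e j) (γ j * (d*(x1+u1))))
        + (∑ j ∈ range l, Qfun m (e j) (γ j * (d*x1)))
        + (∑ j ∈ range l, Qfun m (e j) (γ j * (d*u1)))
        = tr1 (m-1) (x1 * (∑ j ∈ range l, (γ j)^2 * (d * Tj j (d*u1) + d^2*u1))) := by
      intro d
      have hQj : ∀ j ∈ range l,
          Qfun m (e j) (γ j * (d*(x1+u1))) + Qfun m (e j) (γ j * (d*x1))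
            + Qfun m (e j) (γ j * (d*u1))
          = tr1 (m-1) (x1 * ((γ j)^2 * (d * Tj j (d*u1) + d^2*u1))) := by
        intro j hj
        have hjl := Finset.mem_range.mp hj
        have hedvd : e j ∣ m - 1 := hchain j hjl
        have hef : e j * ((m-1)/(e j)) = m - 1 := Nat.mul_div_cancel' hedvd
        have hfodd : Odd ((m-1)/(e j)) := by
          have h := hnodd; rw [← hef] at h; exact (Nat.odd_mul.mp h).2
        have hq := Q_second_diff (N := m-1) hn (e j) hef hfodd (γ j * d) x1 u1
        have ha1 : γ j * (d*(x1+u1)) = (γ j * d)*(x1+u1) := by ring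
        have ha2 : γ j * (d*x1) = (γ j * d)*x1 := by ring
        have ha3 : γ j * (d*u1) = (γ j * d)*u1 := by ring
        unfold Qfun
        rw [ha1, ha2, ha3, hq]
        have hTp : Tp (m-1) (e j) ((m-1)/(e j)) ((γ j * d) * u1) = γ j * Tj j (d*u1) := by
          rw [show (γ j * d) * u1 = γ j * (d * u1) from by ring]
          exact Tp_smul _ (hγ j hjl) _
        rw [hTp]
        congr 1
        ring
      rw [← Finset.sum_add_distrib, ← Finset.sum_add_distrib, Finset.sum_congr rfl hQj,
        ← tr1_sum, ← Finset.mul_sum]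
    have hQ0 : ∀ d : Fq (m-1), (∑ j ∈ range l, Qfun m (e j) (γ j * (d * 0))) = 0 := by
      intro d
      refine Finset.sum_eq_zero fun j _ => ?_
      unfold Qfun
      rw [show γ j * (d * 0) = 0 from by ring]
      rw [Finset.sum_eq_zero (fun i _ => zero_pow (by positivity)), tr1_zero]
    have hABc : (a : Fq (m-1))^2 + b^2 = c^2 := by
      rw [hc]; linear_combination (-(a*b)) * fq_two
    have hLsplit : L u1 = (∑ j ∈ range l, (γ j)^2 * (a * Tj j (a*u1) + a^2*u1))
        + (∑ j ∈ range l, (γ j)^2 * (b * Tj j (b*u1) + b^2*u1)) := by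
      rw [hL, ← Finset.sum_add_distrib]
      have h1 : ∀ j ∈ range l, (γ j)^2 * (a * Tj j (a*u1) + a^2*u1)
          + (γ j)^2 * (b * Tj j (b*u1) + b^2*u1)
          = (γ j)^2 * (a * Tj j (a*u1) + b * Tj j (b*u1)) + (γ j)^2 * (c^2*u1) := by
        intro j _
        rw [← hABc]; ring
      rw [Finset.sum_congr rfl h1, Finset.sum_add_distrib, ← Finset.sum_mul]
      ring
    have htra : tr1 (m-1) (a*(x1+u1)) = tr1 (m-1) (a*x1) + tr1 (m-1) (a*u1) := by
      rw [mul_add, tr1_add]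
    have htrb : tr1 (m-1) (b*(x1+u1)) = tr1 (m-1) (b*x1) + tr1 (m-1) (b*u1) := by
      rw [mul_add, tr1_add]
    have htrlam : tr1 (m-1) (lam*(x1+u1)) = tr1 (m-1) (lam*x1) + tr1 (m-1) (lam*u1) := by
      rw [mul_add, tr1_add]
    have htrcu : tr1 (m-1) (c*u1) = tr1 (m-1) (a*u1) + tr1 (m-1) (b*u1) := by
      rw [hc, add_mul, tr1_add]
    have htrcx : tr1 (m-1) (c*x1) = tr1 (m-1) (a*x1) + tr1 (m-1) (b*x1) := by
      rw [hc, add_mul, tr1_add]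
    have htr0 : ∀ d : Fq (m-1), tr1 (m-1) (d * (0:Fq (m-1))) = 0 := by
      intro d; rw [mul_zero, tr1_zero]
    have htL : tr1 (m-1) (x1 * L u1)
        = tr1 (m-1) (x1 * (∑ j ∈ range l, (γ j)^2 * (a * Tj j (a*u1) + a^2*u1)))
        + tr1 (m-1) (x1 * (∑ j ∈ range l, (γ j)^2 * (b * Tj j (b*u1) + b^2*u1))) := by
      rw [hLsplit, mul_add, tr1_add]
    have h2z : (2 : ZMod 2) = 0 := by decide
    simp only [hH]
    linear_combination (hQd a) + (hQd b) + (hQ0 a) + (hQ0 b)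
      + (x2+u2)*htra + (x2+u2+ε)*htrb + htrlam + htL + x2*htrcu + u2*htrcx
      + ε*(htr0 b) + (htr0 lam)
      + (x2*nu + x2*tr1 (m-1) (a*x1) + x2*tr1 (m-1) (b*x1) + x2*tr1 (m-1) (a*u1)
        + x2*tr1 (m-1) (b*u1) - x2*tr1 (m-1) (c*u1)
        + u2*nu + u2*tr1 (m-1) (a*x1) + u2*tr1 (m-1) (b*x1) + u2*tr1 (m-1) (a*u1)
        + u2*tr1 (m-1) (b*u1) - u2*tr1 (m-1) (c*x1)
        + ε*tr1 (m-1) (b*x1) + ε*tr1 (m-1) (b*u1) + tr1 (m-1) (lam*x1) + tr1 (m-1) (lam*u1)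
        + tr1 (m-1) (x1 * ∑ j ∈ range l, (γ j)^2 * (a * Tj j (a*u1) + a^2*u1))
        + tr1 (m-1) (x1 * ∑ j ∈ range l, (γ j)^2 * (b * Tj j (b*u1) + b^2*u1))
        - tr1 (m-1) (x1 * L u1)) * h2z
  -- β
  have hmaster' : ∀ x u : Fq (m-1) × ZMod 2,
      H (x + u) + H x + H u + H (0,0)
      = tr1 (m-1) (x.1 * L u.1) + x.2 * tr1 (m-1) (c * u.1) + u.2 * tr1 (m-1) (c * x.1) :=
    fun x u => hmaster x.1 u.1 x.2 u.2
  have hβadd : ∀ u x y : Fq (m-1) × ZMod 2,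
      (H (x + y + u) + H (x+y) + H u + H (0,0))
      = (H (x + u) + H x + H u + H (0,0)) + (H (y + u) + H y + H u + H (0,0)) := by
    intro u x y
    rw [hmaster' (x+y) u, hmaster' x u, hmaster' y u]
    have h1 : (x+y).1 = x.1 + y.1 := rfl
    have h2 : (x+y).2 = x.2 + y.2 := rfl
    rw [h1, h2]
    have h3 : tr1 (m-1) ((x.1 + y.1) * L u.1)
        = tr1 (m-1) (x.1 * L u.1) + tr1 (m-1) (y.1 * L u.1) := by
      rw [add_mul, tr1_add]
    have h4 : tr1 (m-1) (c * (x.1 + y.1)) = tr1 (m-1) (c * x.1) + tr1 (m-1) (c * y.1) := by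
      rw [mul_add, tr1_add]
    rw [h3, h4]
    ring
  -- kernel
  have hker : ∀ u : Fq (m-1) × ZMod 2,
      (∀ x, H (x + u) + H x + H u + H (0,0) = 0) → u = 0 := by
    intro u hu
    have h1 : tr1 (m-1) (c * u.1) = 0 := by
      have h := hu (0, 1)
      rw [hmaster' (0,1) u] at h
      simp only [zero_mul, mul_zero, tr1_zero, one_mul, add_zero, zero_add] at h
      exact h
    have h2 : ∀ v : Fq (m-1), tr1 (m-1) (v * L u.1) + u.2 * tr1 (m-1) (c * v) = 0 := by
      intro v
      have h := hu (v, 0)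
      rw [hmaster' (v,0) u] at h
      simp only [zero_mul, add_zero] at h
      exact h
    have h3 : L u.1 = algebraMap (ZMod 2) (Fq (m-1)) u.2 * c := by
      rcases zmod2_cases u.2 with h | h
      · rw [h, map_zero, zero_mul]
        apply tr1_nondeg
        intro v
        have hv := h2 v
        rwa [h, zero_mul, add_zero] at hv
      · rw [h, map_one, one_mul]
        have h4 : ∀ v, tr1 (m-1) (v * (L u.1 + c)) = 0 := by
          intro v
          rw [mul_add, tr1_add]
          have hv := h2 v
          rw [h, one_mul, mul_comm c v] at hv
          exact hv
        have h5 := tr1_nondeg _ h4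
        calc L u.1 = L u.1 + (c + c) := by rw [fq_add_self, add_zero]
          _ = (L u.1 + c) + c := by ring
          _ = c := by rw [h5, zero_add]
    -- KEY application
    set t : Fq (m-1) := a * c⁻¹ with ht
    set Y : Fq (m-1) := c * u.1 with hY
    have hct : c * t = a := by
      rw [ht, show c * (a * c⁻¹) = a * (c * c⁻¹) from by ring, mul_inv_cancel₀ hcne, mul_one]
    have hcb : c + a = b := by rw [hc]; linear_combination a * fq_two
    have hca : c + b = a := by rw [hc]; linear_combination b * fq_two
    have hc1t : c * (1 + t) = b := by
      rw [mul_add, mul_one, hct, hcb]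
    have htY : t * Y = a * u.1 := by
      rw [ht, hY, show a * c⁻¹ * (c * u.1) = a * u.1 * (c⁻¹ * c) from by ring,
        inv_mul_cancel₀ hcne, mul_one]
    have hYab : Y = a * u.1 + b * u.1 := by rw [hY, hc]; ring
    have hGsq2 : (∑ i ∈ range l, γ i)^2 = ∑ i ∈ range l, (γ i)^2 := by
      have hfs := fq_frob_sum (N := m-1) (range l) γ 1
      norm_num at hfs
      exact hfs
    have hLΨ : L u.1 = c * ((∑ j ∈ range l, (γ j)^2 * Tp (m-1) (e j) ((m-1) / e j) (t*Y))
        + (1+t) * (∑ j ∈ range l, (γ j)^2 * Tp (m-1) (e j) ((m-1) / e j) Y)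
        + (∑ i ∈ range l, γ i)^2 * Y) := by
      rw [hL]
      have hperj : ∀ j ∈ range l,
          (γ j)^2 * (a * Tj j (a*u.1) + b * Tj j (b*u.1))
          = c * ((γ j)^2 * Tp (m-1) (e j) ((m-1) / e j) (t*Y))
            + c * ((1+t) * ((γ j)^2 * Tp (m-1) (e j) ((m-1) / e j) Y)) := by
        intro j hj
        have hTptY : Tp (m-1) (e j) ((m-1) / e j) (t*Y) = Tj j (a*u.1) := by
          rw [htY]
        have hTpY : Tp (m-1) (e j) ((m-1) / e j) Y = Tj j (a*u.1) + Tj j (b*u.1) := by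
          rw [hYab]
          exact Tp_add _ _ _ _
        rw [hTptY, hTpY]
        have expand : c * ((γ j)^2 * Tj j (a*u.1))
            + c * ((1+t) * ((γ j)^2 * (Tj j (a*u.1) + Tj j (b*u.1))))
            = (γ j)^2 * ((c + c*(1+t)) * Tj j (a*u.1) + (c*(1+t)) * Tj j (b*u.1)) := by
          ring
        rw [expand, hc1t, show c + b = a from hca]
      have htop : (∑ j ∈ range l, (γ j)^2) * c^2 * u.1
          = c * ((∑ i ∈ range l, γ i)^2 * Y) := by
        rw [hGsq2, hY]; ring
      calc (∑ j ∈ range l, (γ j)^2 * (a * Tj j (a*u.1) + b * Tj j (b*u.1)))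
            + (∑ j ∈ range l, (γ j)^2) * c^2 * u.1
          = (∑ j ∈ range l, (c * ((γ j)^2 * Tp (m-1) (e j) ((m-1) / e j) (t*Y))
              + c * ((1+t) * ((γ j)^2 * Tp (m-1) (e j) ((m-1) / e j) Y))))
            + c * ((∑ i ∈ range l, γ i)^2 * Y) := by
            rw [Finset.sum_congr rfl hperj, htop]
        _ = c * ((∑ j ∈ range l, (γ j)^2 * Tp (m-1) (e j) ((m-1) / e j) (t*Y))
              + (1+t) * (∑ j ∈ range l, (γ j)^2 * Tp (m-1) (e j) ((m-1) / e j) Y)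
              + (∑ i ∈ range l, γ i)^2 * Y) := by
            rw [Finset.sum_add_distrib, ← Finset.mul_sum, ← Finset.mul_sum, ← Finset.mul_sum]
            ring
    have hΨ : (∑ j ∈ range l, (γ j)^2 * Tp (m-1) (e j) ((m-1) / e j) (t*Y))
        + (1+t) * (∑ j ∈ range l, (γ j)^2 * Tp (m-1) (e j) ((m-1) / e j) Y)
        + (∑ i ∈ range l, γ i)^2 * Y = algebraMap (ZMod 2) (Fq (m-1)) u.2 := by
      apply mul_left_cancel₀ hcne
      rw [← hLΨ, h3, mul_comm]
    have hside : Tp (m-1) 1 (m-1) Y = 0 := by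
      rw [← tr1_eq_zero_iff hn]
      exact h1
    have hkey := key_lemma (N := m-1) l hl e γ he0 hdvd hpos
      (by rw [hel]; exact hnodd) (fun j hj => hγ j hj) hsum t Y u.2
      (by unfold fx; rw [hel]; exact fq_pow_card hn t)
      (by unfold fx; rw [hel]; exact fq_pow_card hn Y)
      (by rw [hel]; exact hΨ) (by rw [hel]; exact hside)
    obtain ⟨hY0, hu2⟩ := hkey
    have hu1 : u.1 = 0 := by
      rcases mul_eq_zero.mp (hY ▸ hY0 : c * u.1 = 0) with h | h
      · exact absurd h hcne
      · exact h
    have : u = (u.1, u.2) := rfl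
    rw [this, hu1, hu2]
    rfl
  -- ====== Walsh computation ======
  suffices hS : (∑ x : Fq (m-1) × ZMod 2, chi (H x)) = 2 ^ (m / 2)
      ∨ (∑ x : Fq (m-1) × ZMod 2, chi (H x)) = -(2 ^ (m / 2)) by
    exact hS
  set S : ℤ := ∑ x : Fq (m-1) × ZMod 2, chi (H x) with hSdef
  have hcard : Fintype.card (Fq (m-1) × ZMod 2) = 2^m := by
    rw [Fintype.card_prod, fq_card hn, ZMod.card, ← pow_succ]
    congr 1
    omega
  have hS2 : S^2 = 2^m := by
    have hexp : S^2 = ∑ u : Fq (m-1) × ZMod 2, ∑ x : Fq (m-1) × ZMod 2, chi (H x + H (x + u)) := by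
      rw [hSdef, sq, Finset.sum_mul_sum]
      have e1 : ∀ x : Fq (m-1) × ZMod 2, ∑ y : Fq (m-1) × ZMod 2, chi (H x) * chi (H y)
          = ∑ u : Fq (m-1) × ZMod 2, chi (H x + H (x+u)) := by
        intro x
        exact (Fintype.sum_equiv (Equiv.addLeft x) _ _
          (fun u => (chi_add (H x) (H (x+u))))).symm
      rw [Finset.sum_congr rfl (fun x _ => e1 x), Finset.sum_comm]
    have hpp : ∀ p : ZMod 2, p + p = 0 := by decide
    have hF0 : ∑ x : Fq (m-1) × ZMod 2, chi (H x + H (x + 0)) = 2^m := by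
      have hz : ∀ x : Fq (m-1) × ZMod 2, chi (H x + H (x + 0)) = 1 := by
        intro x
        rw [add_zero, hpp, chi_zero]
      rw [Finset.sum_congr rfl (fun x _ => hz x), Finset.sum_const, Finset.card_univ, hcard]
      simp
    have hFne : ∀ u : Fq (m-1) × ZMod 2, u ≠ 0 →
        ∑ x : Fq (m-1) × ZMod 2, chi (H x + H (x + u)) = 0 := by
      intro u hu
      have hsplit : ∀ x : Fq (m-1) × ZMod 2,
          H x + H (x + u) = (H (x + u) + H x + H u + H (0,0)) + (H u + H (0,0)) := by
        intro x
        generalize H (x+u) = p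
        generalize H x = q
        generalize H u = r
        generalize H (0,0) = s'
        revert p q r s'
        decide
      by_cases hall : ∀ x, H (x + u) + H x + H u + H (0,0) = 0
      · exact absurd (hker u hall) hu
      · push_neg at hall
        obtain ⟨x₀, hx₀⟩ := hall
        have hr : ∑ x : Fq (m-1) × ZMod 2, chi (H x + H (x+u))
            = (∑ x : Fq (m-1) × ZMod 2, chi (H (x + u) + H x + H u + H (0,0)))
              * chi (H u + H (0,0)) := by
          rw [Finset.sum_mul]
          refine Finset.sum_congr rfl fun x _ => ?_
          rw [hsplit x, chi_add]
        rw [hr, sum_chi_eq_zero (fun x => H (x + u) + H x + H u + H (0,0))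
          (fun x y => by rw [← hβadd u x y]) x₀ hx₀, zero_mul]
    rw [hexp, Fintype.sum_eq_single (0 : Fq (m-1) × ZMod 2) hFne, hF0]
  have hsq : ((2:ℤ)^(m/2))^2 = 2^m := by
    rw [← pow_mul]
    congr 1
    obtain ⟨k, hk⟩ := hm
    omega
  have hfac : (S - 2^(m/2)) * (S + 2^(m/2)) = 0 := by
    linear_combination hS2 - hsq
  rcases mul_eq_zero.mp hfac with h | h
  · left; linarith [sub_eq_zero.mp h]
  · right
    have := eq_neg_of_add_eq_zero_left h
    linarith [this]
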